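/- For probability measures α, α' on a compact metric space X and β, β' on a compact metric space Y, the product measures satisfy W₁(α ⊗ β, α' ⊗ β') ≤ W₁(α, α') + W₁(β, β'), where X × Y is equipped with the sum (ℓ¹) metric. -/
import Mathlib


open MeasureTheory
open scoped ENNReal NNReal

noncomputable def W1 {X : Type*} [MeasurableSpace X] [PseudoEMetricSpace X]
    (α β : Measure X) : ℝ≥0∞ :=
  ⨅ (π : Measure (X × X)) (_ : π.map Prod.fst = α ∧ π.map Prod.snd = β),
    ∫⁻ p, edist p.1 p.2 ∂π

/-- `W₁` on the product space `X × Y` equipped with the sum (ℓ¹) metric. -/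
noncomputable def W1sum {X Y : Type*} [MeasurableSpace X] [PseudoEMetricSpace X]
    [MeasurableSpace Y] [PseudoEMetricSpace Y]
    (μ ν : Measure (X × Y)) : ℝ≥0∞ :=
  ⨅ (π : Measure ((X × Y) × (X × Y))) (_ : π.map Prod.fst = μ ∧ π.map Prod.snd = ν),
    ∫⁻ p, (edist p.1.1 p.2.1 + edist p.1.2 p.2.2) ∂π

theorem W1_prod_le {X Y : Type*}
    [MetricSpace X] [CompactSpace X] [MeasurableSpace X] [BorelSpace X]
    [MetricSpace Y] [CompactSpace Y] [MeasurableSpace Y] [BorelSpace Y]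
    (α α' : Measure X) (β β' : Measure Y)
    [IsProbabilityMeasure α] [IsProbabilityMeasure α']
    [IsProbabilityMeasure β] [IsProbabilityMeasure β'] :
    W1sum (α.prod β) (α'.prod β') ≤ W1 α α' + W1 β β' := by
  rw [W1, W1]
  simp_rw [ENNReal.iInf_add, ENNReal.add_iInf]
  refine le_iInf fun π₁ => le_iInf fun h₁ => le_iInf fun π₂ => le_iInf fun h₂ => ?_
  -- π₁ and π₂ are probability measures
  have hπ₁ : IsProbabilityMeasure π₁ := by
    constructor
    rw [← Set.preimage_univ (f := Prod.fst), ← Measure.map_apply measurable_fst .univ, h₁.1]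
    exact measure_univ
  have hπ₂ : IsProbabilityMeasure π₂ := by
    constructor
    rw [← Set.preimage_univ (f := Prod.fst), ← Measure.map_apply measurable_fst .univ, h₂.1]
    exact measure_univ
  set e : (X × X) × (Y × Y) → (X × Y) × (X × Y) :=
    fun p => ((p.1.1, p.2.1), (p.1.2, p.2.2)) with he
  have hem : Measurable e := by fun_prop
  set π : Measure ((X × Y) × (X × Y)) := (π₁.prod π₂).map e with hπ
  refine le_trans (iInf₂_le π ⟨?_, ?_⟩) ?_
  · rw [hπ, lintegral_map (by fun_prop) hem]
    have : (fun q : (X × X) × (Y × Y) =>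
        edist (e q).1.1 (e q).2.1 + edist (e q).1.2 (e q).2.2)
        = fun q => edist q.1.1 q.1.2 + edist q.2.1 q.2.2 := rfl
    rw [this, lintegral_add_left (by fun_prop)]
    have h1 : ∫⁻ q : (X × X) × (Y × Y), edist q.1.1 q.1.2 ∂(π₁.prod π₂)
        = ∫⁻ p, edist p.1 p.2 ∂π₁ := by
      have h := lintegral_map (μ := π₁.prod π₂) (g := Prod.fst)
        (f := fun p : X × X => edist p.1 p.2) (by fun_prop) measurable_fst
      rw [Measure.map_fst_prod, measure_univ, one_smul] at h
      exact h.symm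
    have h2 : ∫⁻ q : (X × X) × (Y × Y), edist q.2.1 q.2.2 ∂(π₁.prod π₂)
        = ∫⁻ p, edist p.1 p.2 ∂π₂ := by
      have h := lintegral_map (μ := π₁.prod π₂) (g := Prod.snd)
        (f := fun p : Y × Y => edist p.1 p.2) (by fun_prop) measurable_snd
      rw [Measure.map_snd_prod, measure_univ, one_smul] at h
      exact h.symm
    rw [h1, h2]
  · rw [hπ, Measure.map_map measurable_fst hem]
    have : (Prod.fst ∘ e) = Prod.map (Prod.fst : X × X → X) (Prod.fst : Y × Y → Y) := rfl
    rw [this, ← Measure.map_prod_map _ _ measurable_fst measurable_fst, h₁.1, h₂.1]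
  · rw [hπ, Measure.map_map measurable_snd hem]
    have : (Prod.snd ∘ e) = Prod.map (Prod.snd : X × X → X) (Prod.snd : Y × Y → Y) := rfl
    rw [this, ← Measure.map_prod_map _ _ measurable_snd measurable_snd, h₁.2, h₂.2]
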